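/- For all nonempty finite sequences I and I' of positive integers with the same total sum, I' ∈ C(reverse(bar(I))) if and only if reverse(I) ∈ C(bar(I')). (This is the combinatorial content of the identity D ∘ χ_{𝓕₂} = χ_{𝓕₂*} ∘ D relating the conjugations of the mod 2 Leibniz–Hopf algebra and its dual via the duality D(S^I) = S_{bar(I)}.) -/

import Mathlib

/-- The coarsening set `C(I)`: all sequences obtained from `I` by summing
consecutive blocks of entries.  (`C([]) = {[]}` by convention.) -/
def coars : List ℕ → Finset (List ℕ)
  | [] => {[]}
  | [i] => {[i]}
  | i :: j :: rest =>
      ((coars (j :: rest)).image (i :: ·)) ∪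
      ((coars (j :: rest)).image (fun I' => (i + I'.headD 0) :: I'.tail))

/-- The set of proper partial sums `{i_1, i_1+i_2, …, i_1+⋯+i_{l−1}}` of a
sequence. -/
def psums (I : List ℕ) : Finset ℕ := (Finset.Ico 1 I.length).image fun k => (I.take k).sum

/-- Successive differences of a list (relative to a starting value). -/
def diffs : ℕ → List ℕ → List ℕ
  | _, [] => []
  | prev, x :: xs => (x - prev) :: diffs x xs

/-- The bar dual of a sequence `I` with sum `N`: the unique composition of `N`
whose set of proper partial sums is the complement in `{1,…,N−1}` of the set of
proper partial sums of `I`.  It is obtained by taking successive differences of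
the elements of that complement (listed increasingly, followed by `N`). -/
def bar (I : List ℕ) : List ℕ :=
  diffs 0 ((((Finset.Ico 1 I.sum) \ psums I).sort (· ≤ ·)) ++ [I.sum])

lemma psums_nil : psums [] = ∅ := by simp [psums]

lemma psums_singleton (x : ℕ) : psums [x] = ∅ := by simp [psums]

lemma psums_cons (i : ℕ) (J : List ℕ) (hJ : J ≠ []) :
    psums (i :: J) = insert i ((psums J).image (i + ·)) := by
  have hlen : 1 ≤ J.length := List.length_pos_iff.mpr hJ
  ext s
  simp only [psums, Finset.mem_image, Finset.mem_Ico, Finset.mem_insert]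
  constructor
  · rintro ⟨k, ⟨hk1, hk2⟩, rfl⟩
    match k, hk1 with
    | 1, _ => left; simp
    | (m+2), _ =>
      right
      refine ⟨((J.take (m+1)).sum), ⟨m+1, ⟨by omega, by simp at hk2; omega⟩, rfl⟩, ?_⟩
      simp [List.take_succ_cons]
  · rintro (rfl | ⟨s, ⟨m, ⟨hm1, hm2⟩, rfl⟩, rfl⟩)
    · exact ⟨1, ⟨le_refl _, by simp; omega⟩, by simp⟩
    · exact ⟨m+1, ⟨by omega, by simp; omega⟩, by simp [List.take_succ_cons]⟩

lemma psums_addHead (i h : ℕ) (t : List ℕ) :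
    psums ((i + h) :: t) = (psums (h :: t)).image (i + ·) := by
  rcases eq_or_ne t [] with rfl | ht
  · simp [psums_singleton]
  · rw [psums_cons _ _ ht, psums_cons _ _ ht, Finset.image_insert, Finset.image_image]
    congr 1
    ext s
    simp [add_assoc]

lemma psums_subset_Ico (I : List ℕ) (hpos : ∀ x ∈ I, 0 < x) :
    psums I ⊆ Finset.Ico 1 I.sum := by
  intro s hs
  simp only [psums, Finset.mem_image, Finset.mem_Ico] at hs ⊢
  obtain ⟨k, ⟨hk1, hk2⟩, rfl⟩ := hs
  constructor
  · have htne : I.take k ≠ [] := by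
      intro h
      rcases List.take_eq_nil_iff.mp h with h | h
      · omega
      · subst h; simp at hk2
    have : 0 < (I.take k).sum :=
      List.sum_pos _ (fun x hx => hpos x (List.mem_of_mem_take hx)) htne
    omega
  · have hdne : I.drop k ≠ [] := by
      intro h
      have := List.drop_eq_nil_iff.mp h
      omega
    have hd : 0 < (I.drop k).sum :=
      List.sum_pos _ (fun x hx => hpos x (List.mem_of_mem_drop hx)) hdne
    have := List.sum_take_add_sum_drop I k
    omega

lemma mem_coars (K : List ℕ) (hK : K ≠ []) (hKpos : ∀ x ∈ K, 0 < x) (J : List ℕ) :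
    J ∈ coars K ↔ J ≠ [] ∧ (∀ x ∈ J, 0 < x) ∧ J.sum = K.sum ∧ psums J ⊆ psums K := by
  induction K using coars.induct generalizing J with
  | case1 => exact absurd rfl hK
  | case2 i =>
    have hi : 0 < i := hKpos i (by simp)
    simp only [coars, Finset.mem_singleton]
    constructor
    · rintro rfl
      refine ⟨by simp, by simpa using hi, by simp, by simp⟩
    · rintro ⟨hJne, hJpos, hJsum, hJsub⟩
      rw [psums_singleton] at hJsub
      match J, hJne with
      | [a], _ => simp at hJsum; simp [hJsum]
      | a :: b :: t, _ =>
        exfalso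
        have : a ∈ psums (a :: b :: t) := by
          rw [psums_cons _ _ (by simp)]; simp
        have := hJsub this
        simp at this
  | case3 i j rest IH =>
    set K' : List ℕ := j :: rest with hK'def
    have hK'ne : K' ≠ [] := by simp [hK'def]
    have hi : 0 < i := hKpos i (by simp)
    have hK'pos : ∀ x ∈ K', 0 < x := fun x hx => hKpos x (by simp [hK'def] at hx ⊢; tauto)
    have hK'sumpos : 0 < K'.sum := List.sum_pos _ hK'pos hK'ne
    have IH' := IH hK'ne hK'pos
    have hpsK : psums (i :: K') = insert i ((psums K').image (i + ·)) := psums_cons _ _ hK'ne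
    have hpsK'pos : ∀ s ∈ psums K', 0 < s := by
      intro s hs
      have := psums_subset_Ico K' hK'pos hs
      simp [Finset.mem_Ico] at this
      omega
    rw [hK'def, coars, ← hK'def]
    simp only [Finset.mem_union, Finset.mem_image]
    constructor
    · rintro (⟨J', hJ', rfl⟩ | ⟨J', hJ', rfl⟩)
      · obtain ⟨hne, hpos', hsum', hsub'⟩ := (IH' J').mp hJ'
        refine ⟨by simp, ?_, ?_, ?_⟩
        · intro x hx
          rcases List.mem_cons.mp hx with rfl | hx
          · exact hi
          · exact hpos' x hx
        · simp [hsum']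
        · rw [psums_cons _ _ hne, hpsK]
          intro s hs
          simp only [Finset.mem_insert, Finset.mem_image] at hs ⊢
          rcases hs with rfl | ⟨t, ht, rfl⟩
          · exact Or.inl rfl
          · exact Or.inr ⟨t, hsub' ht, rfl⟩
      · obtain ⟨hne, hpos', hsum', hsub'⟩ := (IH' J').mp hJ'
        match J', hne with
        | h :: t, _ =>
          simp only [List.headD_cons, List.tail_cons]
          have hh : 0 < h := hpos' h (by simp)
          refine ⟨by simp, ?_, ?_, ?_⟩
          · intro x hx
            rcases List.mem_cons.mp hx with rfl | hx
            · omega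
            · exact hpos' x (by simp [hx])
          · simp at hsum' ⊢; omega
          · rw [psums_addHead, hpsK]
            intro s hs
            simp only [Finset.mem_image] at hs
            obtain ⟨t', ht', rfl⟩ := hs
            simp only [Finset.mem_insert, Finset.mem_image]
            exact Or.inr ⟨t', hsub' ht', rfl⟩
    · rintro ⟨hJne, hJpos, hJsum, hJsub⟩
      rw [hpsK] at hJsub
      match J, hJne with
      | a :: T, _ =>
        by_cases hai : a = i
        · subst hai
          left
          have hTsum : T.sum = K'.sum := by simp at hJsum; omega
          have hTne : T ≠ [] := by
            intro h; rw [h] at hTsum; simp at hTsum; omega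
          refine ⟨T, (IH' T).mpr ⟨hTne, fun x hx => hJpos x (by simp [hx]), hTsum, ?_⟩, rfl⟩
          intro s hs
          have hspos : 0 < s := by
            have := psums_subset_Ico T (fun x hx => hJpos x (by simp [hx])) hs
            simp [Finset.mem_Ico] at this; omega
          have : a + s ∈ psums (a :: T) := by
            rw [psums_cons _ _ hTne]
            simp only [Finset.mem_insert, Finset.mem_image]
            exact Or.inr ⟨s, hs, rfl⟩
          have := hJsub this
          simp only [Finset.mem_insert, Finset.mem_image] at this
          rcases this with h | ⟨s', hs', h⟩
          · omega
          · have : s = s' := by omega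
            rwa [this]
        · right
          have hia : i < a := by
            rcases eq_or_ne T [] with rfl | hTne
            · simp at hJsum; omega
            · have ha : a ∈ psums (a :: T) := by
                rw [psums_cons _ _ hTne]; simp
              have := hJsub ha
              simp only [Finset.mem_insert, Finset.mem_image] at this
              rcases this with h | ⟨s', hs', h⟩
              · omega
              · have := hpsK'pos s' hs'; omega
          refine ⟨(a - i) :: T, ?_, ?_⟩
          · have hrw : a = i + (a - i) := by omega
            have hps : psums (a :: T) = (psums ((a - i) :: T)).image (i + ·) := by
              conv_lhs => rw [hrw]
              exact psums_addHead _ _ _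
            refine (IH' _).mpr ⟨by simp, ?_, ?_, ?_⟩
            · intro x hx
              rcases List.mem_cons.mp hx with rfl | hx
              · omega
              · exact hJpos x (by simp [hx])
            · simp at hJsum ⊢; omega
            · intro s hs
              have hspos : 0 < s := by
                have := psums_subset_Ico ((a-i) :: T) (fun x hx => by
                  rcases List.mem_cons.mp hx with rfl | hx
                  · omega
                  · exact hJpos x (by simp [hx])) hs
                simp [Finset.mem_Ico] at this; omega
              have : i + s ∈ psums (a :: T) := by
                rw [hps]; exact Finset.mem_image_of_mem _ hs
              have := hJsub this
              simp only [Finset.mem_insert, Finset.mem_image] at this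
              rcases this with h | ⟨s', hs', h⟩
              · omega
              · have : s = s' := by omega
                rwa [this]
          · simp; omega

lemma psums_reverse (K : List ℕ) :
    psums K.reverse = (psums K).image (K.sum - ·) := by
  ext s
  simp only [psums, List.length_reverse, Finset.mem_image, Finset.mem_Ico]
  constructor
  · rintro ⟨k, ⟨hk1, hk2⟩, rfl⟩
    refine ⟨(K.take (K.length - k)).sum, ⟨K.length - k, ⟨by omega, by omega⟩, rfl⟩, ?_⟩
    rw [List.take_reverse, List.sum_reverse]
    have := List.sum_take_add_sum_drop K (K.length - k)
    omega
  · rintro ⟨t, ⟨m, ⟨hm1, hm2⟩, rfl⟩, rfl⟩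
    refine ⟨K.length - m, ⟨by omega, by omega⟩, ?_⟩
    rw [List.take_reverse, List.sum_reverse]
    have hmm : K.length - (K.length - m) = m := by omega
    rw [hmm]
    have := List.sum_take_add_sum_drop K m
    omega

lemma diffs_length (l : List ℕ) : ∀ prev, (diffs prev l).length = l.length := by
  induction l with
  | nil => intro prev; rfl
  | cons x xs ih => intro prev; simp [diffs, ih]

lemma chain_le_getD (l : List ℕ) : ∀ a, List.Chain (· ≤ ·) a l →
    ∀ i < l.length, a ≤ l.getD i 0 := by
  induction l with
  | nil => intro a _ i hi; simp at hi
  | cons x xs ih =>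
    intro a h i hi
    simp only [List.Chain, List.isChain_cons_cons] at h
    match i with
    | 0 => simpa using h.1
    | (m+1) =>
      simp only [List.getD_cons_succ]
      exact le_trans h.1 (ih x h.2 m (by simpa using hi))

lemma diffs_take_sum (l : List ℕ) : ∀ prev k, List.Chain (· ≤ ·) prev l →
    1 ≤ k → k ≤ l.length → ((diffs prev l).take k).sum + prev = l.getD (k-1) 0 := by
  induction l with
  | nil => intro prev k _ h1 h2; simp at h2; omega
  | cons x xs ih =>
    intro prev k hch h1 h2
    simp only [List.Chain, List.isChain_cons_cons] at hch
    match k with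
    | 1 => simp [diffs]; omega
    | (m+2) =>
      simp only [diffs, List.take_succ_cons, List.sum_cons, Nat.add_sub_cancel, List.getD_cons_succ]
      have := ih x (m+1) hch.2 (by omega) (by simp at h2; omega)
      simp only [Nat.add_sub_cancel] at this
      have hg : (x :: xs).getD (m + 2 - 1) 0 = xs.getD m 0 := rfl
      rw [hg]
      have hpx := hch.1
      have hx : x ≤ xs.getD m 0 := chain_le_getD xs x hch.2 m (by simp at h2; omega)
      omega

lemma diffs_pos (l : List ℕ) : ∀ prev, List.Chain (· < ·) prev l →
    ∀ x ∈ diffs prev l, 0 < x := by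
  induction l with
  | nil => intro prev _ x hx; simp [diffs] at hx
  | cons y ys ih =>
    intro prev hch x hx
    simp only [List.Chain, List.isChain_cons_cons] at hch
    simp only [diffs, List.mem_cons] at hx
    rcases hx with rfl | hx
    · omega
    · exact ih y hch.2 x hx

lemma bar_chain (I : List ℕ) (hI : I ≠ []) (hpos : ∀ i ∈ I, 0 < i) :
    List.Chain (· < ·) 0
      ((((Finset.Ico 1 I.sum) \ psums I).sort (· ≤ ·)) ++ [I.sum]) := by
  have hN : 0 < I.sum := List.sum_pos I hpos hI
  set L := ((Finset.Ico 1 I.sum) \ psums I).sort (· ≤ ·) with hL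
  have hmemL : ∀ y ∈ L, 1 ≤ y ∧ y < I.sum := by
    intro y hy
    rw [hL, Finset.mem_sort, Finset.mem_sdiff, Finset.mem_Ico] at hy
    exact hy.1
  simp only [List.Chain]
  rw [List.isChain_iff_pairwise, List.pairwise_cons]
  constructor
  · intro y hy
    rcases List.mem_append.mp hy with hy | hy
    · exact lt_of_lt_of_le one_pos (hmemL y hy).1
    · simp at hy; omega
  · rw [List.pairwise_append]
    refine ⟨(Finset.sortedLT_sort _).pairwise, by simp, ?_⟩
    intro a ha b hb
    simp at hb
    subst hb
    exact (hmemL a ha).2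

lemma bar_pos (I : List ℕ) (hI : I ≠ []) (hpos : ∀ i ∈ I, 0 < i) :
    ∀ x ∈ bar I, 0 < x :=
  diffs_pos _ 0 (bar_chain I hI hpos)

lemma bar_sum (I : List ℕ) (hI : I ≠ []) (hpos : ∀ i ∈ I, 0 < i) :
    (bar I).sum = I.sum := by
  have hch : List.Chain (· ≤ ·) 0 _ :=
    List.IsChain.imp (fun ⦃a b⦄ (h : a < b) => le_of_lt h) (bar_chain I hI hpos)
  set L := ((Finset.Ico 1 I.sum) \ psums I).sort (· ≤ ·) with hL
  set m : List ℕ := L ++ [I.sum] with hm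
  have hlen : m.length = L.length + 1 := by simp [hm]
  have := diffs_take_sum m 0 m.length hch (by omega) (le_refl _)
  rw [← diffs_length m 0, List.take_length, diffs_length] at this
  rw [List.getD_append_right L [I.sum] 0 (m.length - 1) (by omega)] at this
  simp [hlen] at this
  unfold bar
  rw [← hL, ← hm]
  omega

lemma psums_bar (I : List ℕ) (hI : I ≠ []) (hpos : ∀ i ∈ I, 0 < i) :
    psums (bar I) = Finset.Ico 1 I.sum \ psums I := by
  have hch : List.Chain (· ≤ ·) 0 _ :=
    List.IsChain.imp (fun ⦃a b⦄ (h : a < b) => le_of_lt h) (bar_chain I hI hpos)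
  set L := ((Finset.Ico 1 I.sum) \ psums I).sort (· ≤ ·) with hL
  set m : List ℕ := L ++ [I.sum] with hm
  have hlen : m.length = L.length + 1 := by simp [hm]
  have hbar : bar I = diffs 0 m := by unfold bar; rw [← hL, ← hm]
  ext s
  rw [hbar]
  simp only [psums, diffs_length, Finset.mem_image, Finset.mem_Ico]
  constructor
  · rintro ⟨k, ⟨hk1, hk2⟩, rfl⟩
    have hts := diffs_take_sum m 0 k hch hk1 (by omega)
    have hkL : k - 1 < L.length := by omega
    rw [List.getD_append L [I.sum] 0 (k-1) hkL] at hts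
    rw [List.getD_eq_getElem L 0 hkL] at hts
    have hmem : L[k-1] ∈ L := List.getElem_mem _
    have hmem2 : L[k-1] ∈ Finset.Ico 1 I.sum \ psums I := (Finset.mem_sort _).mp hmem
    have heq : (List.take k (diffs 0 m)).sum = L[k - 1] := by omega
    rw [heq]
    simpa [psums] using hmem2
  · intro hs
    have hmem : s ∈ L := by rw [hL, Finset.mem_sort]; exact hs
    obtain ⟨j, hj, hje⟩ := List.mem_iff_getElem.mp hmem
    refine ⟨j + 1, ⟨by omega, by omega⟩, ?_⟩
    have hts := diffs_take_sum m 0 (j+1) hch (by omega) (by omega)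
    rw [List.getD_append L [I.sum] 0 (j+1-1) (by omega)] at hts
    rw [List.getD_eq_getElem L 0 (by omega : j+1-1 < L.length)] at hts
    simp only [Nat.add_sub_cancel] at hts
    omega

lemma key_iff (N : ℕ) (A A' : Finset ℕ) (hA : A ⊆ Finset.Ico 1 N)
    (hA' : A' ⊆ Finset.Ico 1 N) :
    (A' ⊆ (Finset.Ico 1 N \ A).image (N - ·)) ↔
      ((A.image (N - ·)) ⊆ Finset.Ico 1 N \ A') := by
  constructor
  · intro h x hx
    simp only [Finset.mem_image] at hx
    obtain ⟨s, hs, rfl⟩ := hx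
    have hsI := hA hs
    simp only [Finset.mem_Ico] at hsI
    rw [Finset.mem_sdiff, Finset.mem_Ico]
    refine ⟨⟨by omega, by omega⟩, ?_⟩
    intro hmem
    have := h hmem
    simp only [Finset.mem_image, Finset.mem_sdiff, Finset.mem_Ico] at this
    obtain ⟨u, ⟨⟨hu1, hu2⟩, huA⟩, hueq⟩ := this
    have : u = s := by omega
    exact huA (this ▸ hs)
  · intro h t ht
    have htI := hA' ht
    simp only [Finset.mem_Ico] at htI
    simp only [Finset.mem_image, Finset.mem_sdiff, Finset.mem_Ico]
    refine ⟨N - t, ⟨⟨by omega, by omega⟩, ?_⟩, by omega⟩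
    intro hmem
    have : N - (N - t) ∈ A.image (N - ·) := Finset.mem_image_of_mem _ hmem
    have h2 := h this
    rw [Finset.mem_sdiff] at h2
    have htt : N - (N - t) = t := by omega
    rw [htt] at h2
    exact h2.2 ht


/-- The combinatorial content of `D ∘ χ_{𝓕₂} = χ_{𝓕₂*} ∘ D`: for nonempty
sequences `I`, `I'` of positive integers with the same total sum,
`I' ∈ C(reverse (bar I))` iff `reverse I ∈ C(bar I')`. -/
theorem duality_conjugation (I I' : List ℕ) (hI : I ≠ []) (hI' : I' ≠ [])
    (hpos : ∀ i ∈ I, 0 < i) (hpos' : ∀ i ∈ I', 0 < i) (hsum : I.sum = I'.sum) :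
    I' ∈ coars ((bar I).reverse) ↔ I.reverse ∈ coars (bar I') := by
  have hN : 0 < I.sum := List.sum_pos I hpos hI
  have hbsI := bar_sum I hI hpos
  have hbsI' := bar_sum I' hI' hpos'
  have hbarIne : bar I ≠ [] := by
    intro h; rw [h] at hbsI; simp at hbsI; omega
  have hbarI'ne : bar I' ≠ [] := by
    intro h; rw [h] at hbsI'; simp at hbsI'; omega
  have h1 := mem_coars ((bar I).reverse) (by simpa using hbarIne)
    (fun x hx => bar_pos I hI hpos x (List.mem_reverse.mp hx)) I'
  have h2 := mem_coars (bar I') hbarI'ne (bar_pos I' hI' hpos') I.reverse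
  have e1 : psums ((bar I).reverse) = (Finset.Ico 1 I.sum \ psums I).image (I.sum - ·) := by
    rw [psums_reverse, psums_bar I hI hpos, hbsI]
  have e2 : psums I.reverse = (psums I).image (I.sum - ·) := psums_reverse I
  have e3 : psums (bar I') = Finset.Ico 1 I.sum \ psums I' := by
    rw [psums_bar I' hI' hpos', ← hsum]
  have hA : psums I ⊆ Finset.Ico 1 I.sum := psums_subset_Ico I hpos
  have hA' : psums I' ⊆ Finset.Ico 1 I.sum := by
    rw [hsum]; exact psums_subset_Ico I' hpos'
  have hIrne : I.reverse ≠ [] := by simpa using hI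
  have hIrpos : ∀ x ∈ I.reverse, 0 < x := fun x hx => hpos x (List.mem_reverse.mp hx)
  have hkey := key_iff I.sum (psums I) (psums I') hA hA'
  rw [h1, h2]
  constructor
  · rintro ⟨-, -, -, hsub⟩
    refine ⟨hIrne, hIrpos, ?_, ?_⟩
    · rw [List.sum_reverse, hbsI', hsum]
    · rw [e2, e3]
      exact hkey.mp (by rwa [e1] at hsub)
  · rintro ⟨-, -, -, hsub⟩
    refine ⟨hI', hpos', ?_, ?_⟩
    · rw [List.sum_reverse, hbsI, ← hsum]
    · rw [e1]
      exact hkey.mpr (by rwa [e2, e3] at hsub)
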